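/- arXiv:2006.09365 — 6 statements merged into one kernel-verified Lean document; each statement's English description precedes it below -/
import Mathlib

section
/- Let y_1,…,y_m be vectors in a real Hilbert space, let {1,…,m} = G̃ ⊎ B̃ be a partition with |G̃| > |B̃|, and let y* be any minimizer of v ↦ Σ_{i=1}^m ‖v − y_i‖. Then for every point x̄ in the space, ‖y* − x̄‖ ≤ (2 / (|G̃| − |B̃|)) · Σ_{i∈G̃} ‖y_i − x̄‖. -/
/-- **Geometric median deviation bound (deterministic).**
If `y*` minimizes `v ↦ Σᵢ ‖v - yᵢ‖` over a real Hilbert space, and the index set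
`{1,…,m}` is partitioned into good indices `G̃` and bad indices `B̃ = G̃ᶜ` with
`|G̃| > |B̃|`, then for every point `x̄`,
`‖y* - x̄‖ ≤ (2 / (|G̃| - |B̃|)) · Σ_{i∈G̃} ‖yᵢ - x̄‖`. -/
theorem geometric_median_deviation {H : Type*} [NormedAddCommGroup H]
    [InnerProductSpace ℝ H] [CompleteSpace H]
    {m : ℕ} (y : Fin m → H) (Gt : Finset (Fin m))
    (hcard : (Gtᶜ).card < Gt.card)
    (ystar : H)
    (hmin : ∀ v : H, ∑ i, ‖ystar - y i‖ ≤ ∑ i, ‖v - y i‖)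
    (xbar : H) :
    ‖ystar - xbar‖ ≤
      (2 / ((Gt.card : ℝ) - ((Gtᶜ).card : ℝ))) * ∑ i ∈ Gt, ‖y i - xbar‖ := by
  set r : ℝ := ‖ystar - xbar‖ with hr
  set S : ℝ := ∑ i ∈ Gt, ‖y i - xbar‖ with hS
  set T : ℝ := ∑ i ∈ Gtᶜ, ‖y i - xbar‖ with hT
  have hpos : (0:ℝ) < (Gt.card : ℝ) - ((Gtᶜ).card : ℝ) := by
    have := hcard; push_cast; exact sub_pos.mpr (by exact_mod_cast this)
  have h1 : (Gt.card : ℝ) * r - S ≤ ∑ i ∈ Gt, ‖ystar - y i‖ := by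
    have : ∑ i ∈ Gt, (r - ‖y i - xbar‖) ≤ ∑ i ∈ Gt, ‖ystar - y i‖ := by
      apply Finset.sum_le_sum
      intro i _
      have h := norm_sub_le (ystar - y i) (xbar - y i)
      have h2 : ystar - y i - (xbar - y i) = ystar - xbar := by abel
      rw [h2] at h
      have h3 : ‖xbar - y i‖ = ‖y i - xbar‖ := norm_sub_rev _ _
      linarith
    simpa [Finset.sum_sub_distrib, Finset.sum_const, nsmul_eq_mul] using this
  have h2 : T - ((Gtᶜ).card : ℝ) * r ≤ ∑ i ∈ Gtᶜ, ‖ystar - y i‖ := by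
    have : ∑ i ∈ Gtᶜ, (‖y i - xbar‖ - r) ≤ ∑ i ∈ Gtᶜ, ‖ystar - y i‖ := by
      apply Finset.sum_le_sum
      intro i _
      have h : ‖xbar - y i‖ ≤ ‖xbar - ystar‖ + ‖ystar - y i‖ := by
        have h2 : xbar - ystar + (ystar - y i) = xbar - y i := by abel
        simpa [h2] using norm_add_le (xbar - ystar) (ystar - y i)
      have h3 : ‖xbar - y i‖ = ‖y i - xbar‖ := norm_sub_rev _ _
      have h4 : ‖xbar - ystar‖ = r := norm_sub_rev _ _
      linarith
    simpa [Finset.sum_sub_distrib, Finset.sum_const, nsmul_eq_mul] using this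
  have hmin' : ∑ i ∈ Gt, ‖ystar - y i‖ + ∑ i ∈ Gtᶜ, ‖ystar - y i‖ ≤ S + T := by
    have h := hmin xbar
    rw [Finset.sum_add_sum_compl Gt (fun i => ‖ystar - y i‖)]
    rw [← Finset.sum_add_sum_compl Gt (fun i => ‖xbar - y i‖)] at h
    simpa [norm_sub_rev xbar, hS, hT] using h
  have key : ((Gt.card : ℝ) - ((Gtᶜ).card : ℝ)) * r ≤ 2 * S := by nlinarith
  rw [div_mul_eq_mul_div, le_div_iff₀ hpos]
  nlinarith
end

section
/- Let y_1,…,y_m be vectors in a real Hilbert space and let {1,…,m} = G̃ ⊎ B̃ be a partition. Let (k*, S*) minimize Σ_{j∈S} ‖y_k − y_j‖² over all k ∈ {1,…,m} and all subsets S ⊆ {1,…,m} with |S| = ⌈3m/4⌉. If ⌈3m/4⌉ > 3|B̃|, then for every point x̄ in the space, ‖y_{k*} − x̄‖² ≤ (2 Σ_{i∈S*} ‖y_{k*} − y_i‖² + 2 Σ_{i∈G̃} ‖y_i − x̄‖²) / (⌈3m/4⌉ − 3|B̃|). -/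
/-- **Krum deviation bound (deterministic).**
Let `(k*, S*)` minimize `Σ_{j∈S} ‖y_k - y_j‖²` over `k ∈ {1,…,m}` and `S ⊆ {1,…,m}`
with `|S| = ⌈3m/4⌉` (written `(3m+3)/4` in natural-number division).
If `⌈3m/4⌉ > 3|B̃|` where `B̃ = G̃ᶜ`, then for every point `x̄`,
`‖y_{k*} - x̄‖² ≤ (2 Σ_{i∈S*} ‖y_{k*} - y_i‖² + 2 Σ_{i∈G̃} ‖y_i - x̄‖²) / (⌈3m/4⌉ - 3|B̃|)`. -/
theorem krum_deviation {H : Type*} [NormedAddCommGroup H]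
    [InnerProductSpace ℝ H] [CompleteSpace H]
    {m : ℕ} (y : Fin m → H) (Gt : Finset (Fin m))
    (kstar : Fin m) (Sstar : Finset (Fin m))
    (hScard : Sstar.card = (3 * m + 3) / 4)
    (hmin : ∀ (k : Fin m) (S : Finset (Fin m)), S.card = (3 * m + 3) / 4 →
      ∑ j ∈ Sstar, ‖y kstar - y j‖ ^ 2 ≤ ∑ j ∈ S, ‖y k - y j‖ ^ 2)
    (hB : 3 * (Gtᶜ).card < (3 * m + 3) / 4) :
    ∀ xbar : H,
      ‖y kstar - xbar‖ ^ 2 ≤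
        (2 * ∑ i ∈ Sstar, ‖y kstar - y i‖ ^ 2 + 2 * ∑ i ∈ Gt, ‖y i - xbar‖ ^ 2) /
          ((((3 * m + 3) / 4 : ℕ) : ℝ) - 3 * ((Gtᶜ).card : ℝ)) := by
  intro xbar
  set q : ℕ := (3 * m + 3) / 4 with hq
  set B : Finset (Fin m) := Gtᶜ with hBdef
  set n : ℕ := (Sstar ∩ Gt).card with hn
  have hd : (0:ℝ) < (q:ℝ) - 3 * (B.card : ℝ) := by
    have : (3 * B.card : ℝ) < (q:ℝ) := by exact_mod_cast hB
    linarith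
  have key : ∀ i, ‖y kstar - xbar‖ ^ 2 ≤ 2 * ‖y kstar - y i‖ ^ 2 + 2 * ‖y i - xbar‖ ^ 2 := by
    intro i
    have h1 : ‖y kstar - xbar‖ ≤ ‖y kstar - y i‖ + ‖y i - xbar‖ :=
      norm_sub_le_norm_sub_add_norm_sub _ _ _
    nlinarith [sq_nonneg (‖y kstar - y i‖ - ‖y i - xbar‖), norm_nonneg (y kstar - xbar),
      norm_nonneg (y kstar - y i), norm_nonneg (y i - xbar)]
  have hcard : q ≤ n + B.card := by
    have h1 : Sstar.card = (Sstar ∩ Gt).card + (Sstar \ Gt).card :=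
      (Finset.card_inter_add_card_sdiff _ _).symm
    have h2 : (Sstar \ Gt).card ≤ B.card := by
      apply Finset.card_le_card
      intro x hx
      simp only [Finset.mem_sdiff] at hx
      simp [hBdef, hx.2]
    omega
  have hnd : (q:ℝ) - 3 * (B.card : ℝ) ≤ (n:ℝ) := by
    have : (q:ℝ) ≤ (n:ℝ) + (B.card : ℝ) := by exact_mod_cast hcard
    have hB0 : (0:ℝ) ≤ (B.card : ℝ) := by positivity
    linarith
  have hsum : (n:ℝ) * ‖y kstar - xbar‖ ^ 2 ≤
      2 * ∑ i ∈ Sstar, ‖y kstar - y i‖ ^ 2 + 2 * ∑ i ∈ Gt, ‖y i - xbar‖ ^ 2 := by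
    have h1 : (n:ℝ) * ‖y kstar - xbar‖ ^ 2 =
        ∑ _i ∈ Sstar ∩ Gt, ‖y kstar - xbar‖ ^ 2 := by
      rw [Finset.sum_const, nsmul_eq_mul]
    rw [h1]
    calc ∑ _i ∈ Sstar ∩ Gt, ‖y kstar - xbar‖ ^ 2
        ≤ ∑ i ∈ Sstar ∩ Gt, (2 * ‖y kstar - y i‖ ^ 2 + 2 * ‖y i - xbar‖ ^ 2) :=
          Finset.sum_le_sum fun i _ => key i
      _ = 2 * ∑ i ∈ Sstar ∩ Gt, ‖y kstar - y i‖ ^ 2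
            + 2 * ∑ i ∈ Sstar ∩ Gt, ‖y i - xbar‖ ^ 2 := by
          rw [Finset.sum_add_distrib, Finset.mul_sum, Finset.mul_sum]
      _ ≤ 2 * ∑ i ∈ Sstar, ‖y kstar - y i‖ ^ 2 + 2 * ∑ i ∈ Gt, ‖y i - xbar‖ ^ 2 := by
          have hA := Finset.sum_le_sum_of_subset_of_nonneg
            (f := fun i => ‖y kstar - y i‖ ^ 2)
            (Finset.inter_subset_left (s₁ := Sstar) (s₂ := Gt))
            (fun i _ _ => by positivity)
          have hC := Finset.sum_le_sum_of_subset_of_nonneg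
            (f := fun i => ‖y i - xbar‖ ^ 2)
            (Finset.inter_subset_right (s₁ := Sstar) (s₂ := Gt))
            (fun i _ _ => by positivity)
          linarith
  rw [le_div_iff₀ hd]
  have hv : (0:ℝ) ≤ ‖y kstar - xbar‖ ^ 2 := by positivity
  nlinarith [hsum, hnd, hv, hd]
end

section
/- For every integer m ≥ 4 and every ρ̃ > 0, there exist i.i.d. real-valued random variables y_1,…,y_m with common mean μ and variance at most ρ̃² such that, with probability at least 1 − (1 − 1/m)^m ≥ 1 − 1/e ≥ 1/2, max_{1≤i≤m} (y_i − μ)² ≥ m ρ̃²/2; consequently E[ max_{1≤i≤m} (y_i − μ)² ] ≥ m ρ̃²/4. -/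
open MeasureTheory ProbabilityTheory

private lemma pi_inter_eval_bool {m : ℕ} (μB : Measure Bool) [IsProbabilityMeasure μB]
    (S : Finset (Fin m)) (B : Fin m → Set Bool) :
    Measure.pi (fun _ : Fin m => μB) (⋂ i ∈ S, Function.eval i ⁻¹' B i)
      = ∏ i ∈ S, μB (B i) := by
  classical
  have hset : (⋂ i ∈ S, Function.eval i ⁻¹' B i)
      = Set.pi Set.univ (fun i => if i ∈ S then B i else Set.univ) := by
    ext ω
    simp only [Set.mem_iInter, Set.mem_preimage, Set.mem_pi, Set.mem_univ, true_implies]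
    refine forall_congr' fun i => ?_
    split <;> simp_all [Function.eval]
  rw [hset, Measure.pi_pi]
  have h2 : ∀ i : Fin m, μB (if i ∈ S then B i else Set.univ)
      = if i ∈ S then μB (B i) else 1 := by
    intro i
    by_cases h : i ∈ S
    · rw [if_pos h, if_pos h]
    · rw [if_neg h, if_neg h]; exact measure_univ
  simp_rw [h2]
  rw [Finset.prod_ite_mem Finset.univ S (fun i => μB (B i)), Finset.univ_inter]

set_option maxHeartbeats 1000000 in
/-- **Lower bound for the maximum good distance.**
For every `m ≥ 4` and `ρ̃ > 0` there exist i.i.d. real random variables `y₁,…,y_m`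
with common mean `μ₀` and variance at most `ρ̃²`, such that with probability at least
`1 - (1 - 1/m)^m ≥ 1 - 1/e ≥ 1/2` we have `maxᵢ (yᵢ - μ₀)² ≥ m ρ̃²/2`; consequently
`E[maxᵢ (yᵢ - μ₀)²] ≥ m ρ̃²/4`. -/
theorem max_good_distance_lower_bound (m : ℕ) (hm : 4 ≤ m) (ρt : ℝ) (hρt : 0 < ρt) :
    ∃ (Ω : Type) (_ : MeasurableSpace Ω) (P : Measure Ω),
      IsProbabilityMeasure P ∧
      ∃ (y : Fin m → Ω → ℝ) (μ₀ : ℝ),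
        (∀ i, Measurable (y i)) ∧
        iIndepFun y P ∧
        (∀ i j : Fin m, P.map (y i) = P.map (y j)) ∧
        (∀ i, ∫ ω, y i ω ∂P = μ₀) ∧
        (∀ i, ∫ ω, (y i ω - μ₀) ^ 2 ∂P ≤ ρt ^ 2) ∧
        ENNReal.ofReal (1 - (1 - 1 / (m : ℝ)) ^ m) ≤
          P {ω | (m : ℝ) * ρt ^ 2 / 2 ≤ ⨆ i : Fin m, (y i ω - μ₀) ^ 2} ∧
        1 - 1 / Real.exp 1 ≤ 1 - (1 - 1 / (m : ℝ)) ^ m ∧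
        (1 : ℝ) / 2 ≤ 1 - 1 / Real.exp 1 ∧
        (m : ℝ) * ρt ^ 2 / 4 ≤ ∫ ω, (⨆ i : Fin m, (y i ω - μ₀) ^ 2) ∂P := by
  classical
  have hm0 : (0:ℝ) < m := by
    have : (4:ℝ) ≤ m := by exact_mod_cast hm
    linarith
  set r : ℝ := 1 / (m : ℝ) with hr
  have hr0 : 0 < r := by positivity
  have hr4 : r ≤ 1/4 := by
    rw [hr]
    rw [div_le_div_iff₀ hm0 (by norm_num)]
    have : (4:ℝ) ≤ m := by exact_mod_cast hm
    linarith
  have hr1 : r ≤ 1 := by linarith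
  have hrm : r * m = 1 := by
    rw [hr]; field_simp
  -- the Bernoulli measure on Bool
  set p : ENNReal := ENNReal.ofReal r with hp
  set q : ENNReal := ENNReal.ofReal (1 - r) with hq
  set μB : Measure Bool := p • Measure.dirac true + q • Measure.dirac false with hμB
  have hμBapp : ∀ s : Set Bool, MeasurableSet s →
      μB s = p * (Measure.dirac true) s + q * (Measure.dirac false) s := by
    intro s hs
    simp [hμB]
  have hμBuniv : μB Set.univ = 1 := by
    rw [hμBapp _ MeasurableSet.univ]
    simp only [measure_univ, mul_one]
    rw [hp, hq, ← ENNReal.ofReal_add (le_of_lt hr0) (by linarith)]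
    norm_num
  haveI : IsProbabilityMeasure μB := ⟨hμBuniv⟩
  -- integration against μB
  have hIntB : ∀ g : Bool → ℝ, ∫ b, g b ∂μB = r * g true + (1 - r) * g false := by
    intro g
    have hint : ∀ (a : Bool) (c : ENNReal), c ≠ ⊤ → Integrable g (c • Measure.dirac a) :=
      fun a c hc => Integrable.smul_measure Integrable.of_finite hc
    rw [hμB, integral_add_measure (hint _ _ ENNReal.ofReal_ne_top)
      (hint _ _ ENNReal.ofReal_ne_top)]
    rw [integral_smul_measure, integral_smul_measure, integral_dirac, integral_dirac]
    rw [ENNReal.toReal_ofReal (le_of_lt hr0), ENNReal.toReal_ofReal (by linarith)]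
    simp [smul_eq_mul]
  -- the product space
  set P : Measure (Fin m → Bool) := Measure.pi (fun _ => μB) with hP
  haveI : IsProbabilityMeasure P := by rw [hP]; infer_instance
  have hkey : ∀ (S : Finset (Fin m)) (B : Fin m → Set Bool),
      P (⋂ i ∈ S, Function.eval i ⁻¹' B i) = ∏ i ∈ S, μB (B i) :=
    fun S B => pi_inter_eval_bool μB S B
  have hsingle : ∀ (i : Fin m) (s : Set Bool), P ((fun ω => ω i) ⁻¹' s) = μB s := by
    intro i s
    have h := hkey {i} (fun _ => s)
    simpa using h
  have hmap : ∀ i : Fin m, P.map (fun ω => ω i) = μB := by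
    intro i
    ext s hs
    rw [Measure.map_apply (measurable_pi_apply i) hs]
    exact hsingle i s
  -- the random variables
  set c : ℝ := ρt * Real.sqrt m with hc
  have hc2 : c ^ 2 = ρt ^ 2 * m := by
    rw [hc, mul_pow, Real.sq_sqrt (le_of_lt hm0)]
  have hcpos : 0 < c := by
    rw [hc]; positivity
  set g : Bool → ℝ := fun b => if b then c else 0 with hg
  have hgmeas : Measurable g := measurable_of_countable g
  set y : Fin m → (Fin m → Bool) → ℝ := fun i ω => g (ω i) with hy
  set μ₀ : ℝ := r * c with hμ₀
  have hymeas : ∀ i, Measurable (y i) := fun i => hgmeas.comp (measurable_pi_apply i)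
  -- expectations of functions of y i
  have hIntP : ∀ (i : Fin m) (f : Bool → ℝ),
      ∫ ω, f (ω i) ∂P = r * f true + (1 - r) * f false := by
    intro i f
    have hmeas : Measurable f := measurable_of_countable f
    rw [← hIntB f, ← hmap i, integral_map (measurable_pi_apply i).aemeasurable
      hmeas.aestronglyMeasurable]
  have hmean : ∀ i, ∫ ω, y i ω ∂P = μ₀ := by
    intro i
    rw [hy]
    rw [hIntP i g]
    simp [hg, hμ₀]
  have hgt : g true = c := rfl
  have hgf : g false = 0 := rfl
  have hvar : ∀ i, ∫ ω, (y i ω - μ₀) ^ 2 ∂P ≤ ρt ^ 2 := by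
    intro i
    have h := hIntP i (fun b => (g b - μ₀) ^ 2)
    calc ∫ ω, (y i ω - μ₀) ^ 2 ∂P
        = r * (g true - μ₀) ^ 2 + (1 - r) * (g false - μ₀) ^ 2 := h
      _ ≤ ρt ^ 2 := by
          rw [hgt, hgf, hμ₀]
          have he : r * (c - r * c) ^ 2 + (1 - r) * (0 - r * c) ^ 2
              = (r * (1 - r)) * c ^ 2 := by ring
          rw [he, hc2]
          have h1r : r * (1 - r) * (ρt ^ 2 * ↑m) = (r * m) * (1 - r) * ρt ^ 2 := by ring
          rw [h1r, hrm]
          nlinarith [sq_nonneg ρt]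
  -- independence
  have hindep : iIndepFun y P := by
    rw [iIndepFun_iff_measure_inter_preimage_eq_mul]
    intro S sets hsets
    have h1 : ∀ i : Fin m, y i ⁻¹' sets i = Function.eval i ⁻¹' (g ⁻¹' sets i) := by
      intro i; rfl
    simp_rw [h1]
    rw [hkey S (fun i => g ⁻¹' sets i)]
    refine Finset.prod_congr rfl fun i _ => ?_
    exact (hsingle i (g ⁻¹' sets i)).symm
  -- identical distribution
  have hident : ∀ i j : Fin m, P.map (y i) = P.map (y j) := by
    intro i j
    have h1 : ∀ k : Fin m, P.map (y k) = μB.map g := by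
      intro k
      have h0 : y k = g ∘ (fun ω : Fin m → Bool => ω k) := rfl
      rw [h0, ← Measure.map_map hgmeas (measurable_pi_apply k), hmap k]
    rw [h1 i, h1 j]
  -- the sup
  have i0 : Fin m := ⟨0, by omega⟩
  have hbdd : ∀ ω, BddAbove (Set.range fun i : Fin m => (y i ω - μ₀) ^ 2) :=
    fun ω => (Set.finite_range _).bddAbove
  have hsup_ge : ∀ (ω) (i : Fin m), (y i ω - μ₀) ^ 2 ≤ ⨆ j : Fin m, (y j ω - μ₀) ^ 2 :=
    fun ω i => le_ciSup (hbdd ω) i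
  have hsup_nonneg : ∀ ω, 0 ≤ ⨆ j : Fin m, (y j ω - μ₀) ^ 2 :=
    fun ω => le_trans (sq_nonneg _) (hsup_ge ω i0)
  -- the good event
  set S : Set (Fin m → Bool) :=
    {ω | (m : ℝ) * ρt ^ 2 / 2 ≤ ⨆ i : Fin m, (y i ω - μ₀) ^ 2} with hS
  have hSmeas : MeasurableSet S := (Set.to_countable S).measurableSet
  set T : Set (Fin m → Bool) := {ω | ∀ i, ω i = false} with hT
  have hTsub : Tᶜ ⊆ S := by
    intro ω hω
    simp only [hT, Set.mem_compl_iff, Set.mem_setOf_eq, not_forall] at hω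
    obtain ⟨i, hi⟩ := hω
    have hωi : ω i = true := by
      cases h : ω i
      · exact absurd h hi
      · rfl
    have hyi : y i ω = c := by simp [hy, hg, hωi]
    have hterm : (m : ℝ) * ρt ^ 2 / 2 ≤ (y i ω - μ₀) ^ 2 := by
      rw [hyi, hμ₀]
      have : (c - r * c) ^ 2 = (1 - r) ^ 2 * c ^ 2 := by ring
      rw [this, hc2]
      have h9 : (9:ℝ)/16 ≤ (1 - r) ^ 2 := by nlinarith
      have hnn : 0 ≤ ρt ^ 2 * (m : ℝ) := by positivity
      nlinarith [mul_le_mul_of_nonneg_right h9 hnn]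
    exact le_trans hterm (hsup_ge ω i)
  have hTeq : T = ⋂ i ∈ (Finset.univ : Finset (Fin m)), Function.eval i ⁻¹' {false} := by
    ext ω
    simp [hT, Function.eval]
  have hTmeas : MeasurableSet T := by
    rw [hTeq]
    exact MeasurableSet.biInter (Set.to_countable _)
      (fun i _ => (measurable_pi_apply i) (measurableSet_singleton false))
  have hμBfalse : μB {false} = q := by
    rw [hμBapp _ (measurableSet_singleton false)]
    rw [Measure.dirac_apply' _ (measurableSet_singleton false),
      Measure.dirac_apply' _ (measurableSet_singleton false)]
    simp
  have hPT : P T = ENNReal.ofReal ((1 - r) ^ m) := by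
    rw [hTeq, hkey Finset.univ (fun _ => {false})]
    simp_rw [hμBfalse]
    rw [Finset.prod_const, Finset.card_univ, Fintype.card_fin, hq]
    rw [← ENNReal.ofReal_pow (by linarith)]
  have hpow1 : (1 - r) ^ m ≤ 1 := pow_le_one₀ (by linarith) (by linarith)
  have hpow0 : 0 ≤ (1 - r) ^ m := pow_nonneg (by linarith) m
  have hofReal : ENNReal.ofReal (1 - (1 - r) ^ m) = 1 - ENNReal.ofReal ((1 - r) ^ m) := by
    refine ENNReal.eq_sub_of_add_eq ENNReal.ofReal_ne_top ?_
    rw [← ENNReal.ofReal_add (by linarith) hpow0]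
    norm_num
  have hPS : ENNReal.ofReal (1 - (1 - r) ^ m) ≤ P S := by
    calc ENNReal.ofReal (1 - (1 - r) ^ m) = 1 - P T := by rw [hofReal, hPT]
    _ = P Tᶜ := (prob_compl_eq_one_sub hTmeas).symm
    _ ≤ P S := measure_mono hTsub
  -- scalar inequalities
  have hexp : (1 - r) ^ m ≤ 1 / Real.exp 1 := by
    have h1 : 1 - r ≤ Real.exp (-r) := by
      have := Real.add_one_le_exp (-r)
      linarith
    have h2 : (1 - r) ^ m ≤ (Real.exp (-r)) ^ m :=
      pow_le_pow_left₀ (by linarith) h1 m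
    have h3 : (Real.exp (-r)) ^ m = Real.exp (-(r * m)) := by
      rw [← Real.exp_nat_mul]
      ring_nf
    rw [h3, hrm] at h2
    rw [Real.exp_neg] at h2
    rw [one_div]
    exact h2
  have hhalf : (1:ℝ) / 2 ≤ 1 - 1 / Real.exp 1 := by
    have h2 : (2:ℝ) ≤ Real.exp 1 := by
      have := Real.add_one_le_exp 1
      linarith
    have hepos : (0:ℝ) < Real.exp 1 := Real.exp_pos 1
    have : 1 / Real.exp 1 ≤ 1 / 2 := by
      apply div_le_div_of_nonneg_left (by norm_num) (by norm_num) h2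
    linarith
  -- expectation lower bound
  have htoReal : 1 - (1 - r) ^ m ≤ (P S).toReal := by
    have h1 := ENNReal.toReal_mono (measure_ne_top P S) hPS
    rwa [ENNReal.toReal_ofReal (by linarith)] at h1
  have hPShalf : (1:ℝ) / 2 ≤ (P S).toReal := by
    have : 1 - 1 / Real.exp 1 ≤ 1 - (1 - r) ^ m := by linarith
    linarith
  have hindle : ∀ ω, S.indicator (fun _ => (m : ℝ) * ρt ^ 2 / 2) ω
      ≤ ⨆ i : Fin m, (y i ω - μ₀) ^ 2 := by
    intro ω
    by_cases hω : ω ∈ S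
    · rw [Set.indicator_of_mem hω]
      exact hω
    · rw [Set.indicator_of_notMem hω]
      exact hsup_nonneg ω
  have hint1 : Integrable (S.indicator (fun _ => (m : ℝ) * ρt ^ 2 / 2)) P :=
    Integrable.of_finite
  have hint2 : Integrable (fun ω => ⨆ i : Fin m, (y i ω - μ₀) ^ 2) P :=
    Integrable.of_finite
  have hEind : ∫ ω, S.indicator (fun _ => (m : ℝ) * ρt ^ 2 / 2) ω ∂P
      = (P S).toReal * ((m : ℝ) * ρt ^ 2 / 2) := by
    rw [integral_indicator_const _ hSmeas]
    simp [smul_eq_mul]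
    exact Or.inl rfl
  have hfinal : (m : ℝ) * ρt ^ 2 / 4 ≤ ∫ ω, (⨆ i : Fin m, (y i ω - μ₀) ^ 2) ∂P := by
    have h1 : ∫ ω, S.indicator (fun _ => (m : ℝ) * ρt ^ 2 / 2) ω ∂P
        ≤ ∫ ω, (⨆ i : Fin m, (y i ω - μ₀) ^ 2) ∂P :=
      integral_mono hint1 hint2 hindle
    rw [hEind] at h1
    have h2 : (m : ℝ) * ρt ^ 2 / 4 ≤ (P S).toReal * ((m : ℝ) * ρt ^ 2 / 2) := by
      have hpos : 0 ≤ (m : ℝ) * ρt ^ 2 / 2 := by positivity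
      have h3 := mul_le_mul_of_nonneg_right hPShalf hpos
      linarith
    linarith
  exact ⟨Fin m → Bool, inferInstance, P, inferInstance, y, μ₀, hymeas, hindep, hident,
    hmean, hvar, hPS, by linarith [hexp], hhalf, hfinal⟩
end

section
/- (Theorem III, lower bound.) For every integer n ≥ 1, every δ ∈ (0, 1/2] such that δn is a positive integer, every μ ∈ (0, 1], every ζ > 0, and every function Alg mapping n-tuples of functions ℝ → ℝ to points of ℝ, there exist functions f_1,…,f_n : ℝ → ℝ, each twice differentiable, 1-smooth (derivative 1-Lipschitz) and μ-strongly convex, and a set G ⊆ {1,…,n} with |G| ≥ (1−δ)n, such that, writing f := (1/|G|) Σ_{i∈G} f_i and x_out := Alg(f_1,…,f_n): (i) (1/|G|) Σ_{i∈G} |f_i′(x) − f′(x)|² ≤ ζ² for all x ∈ ℝ; (ii) f(x_out) − inf_x f(x) ≥ δζ²/(8μ); and (iii) |f′(x_out)|² ≥ δζ²/4. -/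
lemma hasDerivAt_quad (μ a x : ℝ) : HasDerivAt (fun y => μ/2*(y-a)^2) (μ*(x-a)) x := by
  have h : HasDerivAt (fun y : ℝ => y - a) 1 x := (hasDerivAt_id x).sub_const a
  have h2 : HasDerivAt (fun y => μ/2*(y-a)^2) (μ/2*((2:ℕ)*(x-a)^(2-1)*1)) x :=
    (h.pow 2).const_mul (μ/2)
  convert h2 using 1
  ring

lemma ciInf_quad (μ m K : ℝ) (F : ℝ → ℝ) (hF : ∀ z, F z = μ/2*(z-m)^2 + K)
    (hμ : 0 ≤ μ) : ⨅ z : ℝ, F z = K := by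
  have hbdd : BddBelow (Set.range F) := by
    refine ⟨K, ?_⟩
    rintro y ⟨z, rfl⟩
    rw [hF]; nlinarith [sq_nonneg (z - m)]
  apply le_antisymm
  · have := ciInf_le hbdd m
    simpa [hF m] using this
  · exact le_ciInf fun z => by rw [hF]; nlinarith [sq_nonneg (z - m)]

lemma scenario (n : ℕ) (μ δ ζ : ℝ) (hμ0 : 0 < μ)
    (a : Fin n → ℝ) (f : Fin n → ℝ → ℝ)
    (hfeq : ∀ i, f i = fun z => μ/2*(z - a i)^2)
    (G : Finset (Fin n)) (m K : ℝ)
    (havg : ∀ z : ℝ, (G.card : ℝ)⁻¹ * ∑ j ∈ G, μ/2*(z - a j)^2 = μ/2*(z - m)^2 + K)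
    (het : ∀ z : ℝ, (G.card : ℝ)⁻¹ * ∑ i ∈ G, |μ*(z - a i) - μ*(z - m)|^2 ≤ ζ^2)
    (x : ℝ) (hx : δ * ζ^2 ≤ 4 * μ^2 * (x - m)^2) :
    (∀ z : ℝ,
        (G.card : ℝ)⁻¹ * ∑ i ∈ G,
            |deriv (f i) z - deriv (fun w => (G.card : ℝ)⁻¹ * ∑ j ∈ G, f j w) z| ^ 2
          ≤ ζ ^ 2) ∧
      (δ * ζ ^ 2 / (8 * μ) ≤
        (G.card : ℝ)⁻¹ * ∑ j ∈ G, f j x -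
          ⨅ z : ℝ, (G.card : ℝ)⁻¹ * ∑ j ∈ G, f j z) ∧
      δ * ζ ^ 2 / 4 ≤
        |deriv (fun w => (G.card : ℝ)⁻¹ * ∑ j ∈ G, f j w) x| ^ 2 := by
  have hderiv : ∀ i, deriv (f i) = fun z => μ*(z - a i) := by
    intro i; rw [hfeq i]; exact funext fun z => (hasDerivAt_quad _ _ z).deriv
  have hF : (fun w => (G.card : ℝ)⁻¹ * ∑ j ∈ G, f j w)
      = fun z => μ/2*(z - m)^2 + K := by
    funext z; simp only [hfeq]; exact havg z
  have hderivF : deriv (fun w => (G.card : ℝ)⁻¹ * ∑ j ∈ G, f j w)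
      = fun z => μ*(z - m) := by
    rw [hF]; exact funext fun z => ((hasDerivAt_quad μ m z).add_const K).deriv
  refine ⟨?_, ?_, ?_⟩
  · intro z
    simp only [hderiv, hderivF]
    exact het z
  · have hx' : (G.card : ℝ)⁻¹ * ∑ j ∈ G, f j x = μ/2*(x - m)^2 + K := congrFun hF x
    have hinf : (⨅ z : ℝ, (G.card : ℝ)⁻¹ * ∑ j ∈ G, f j z) = K := by
      refine ciInf_quad μ m K _ (fun z => congrFun hF z) hμ0.le
    rw [hx', hinf]
    rw [div_le_iff₀ (by positivity)]
    nlinarith [hμ0]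
  · rw [hderivF]
    have : |μ*(x - m)|^2 = μ^2*(x-m)^2 := by rw [sq_abs]; ring
    rw [this]
    linarith

set_option maxHeartbeats 2000000 in
/-- **Theorem III (lower bound for heterogeneous Byzantine robust optimization).**
For every `n`, every `δ ∈ (0,1/2]` with `δn` a positive integer, every `μ ∈ (0,1]`,
every `ζ > 0` and every deterministic algorithm `Alg` mapping `n`-tuples of functions
`ℝ → ℝ` to a point of `ℝ`, there exist `1`-smooth, `μ`-strongly convex, twice
differentiable functions `f₁,…,f_n` and a good set `G` with `|G| ≥ (1-δ)n`, such that
the good objective `f = (1/|G|) Σ_{i∈G} f_i` satisfies the `ζ²` heterogeneity bound,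
while the output `x_out = Alg(f₁,…,f_n)` suffers suboptimality `≥ δζ²/(8μ)` and
squared gradient norm `≥ δζ²/4`. -/
theorem byzantine_noniid_lower_bound
    (n : ℕ) (hn : 1 ≤ n) (δ : ℝ) (hδ0 : 0 < δ) (hδ : δ ≤ 1 / 2)
    (hδn : ∃ q : ℕ, 0 < q ∧ (q : ℝ) = δ * n)
    (μ : ℝ) (hμ0 : 0 < μ) (hμ1 : μ ≤ 1)
    (ζ : ℝ) (hζ : 0 < ζ)
    (Alg : (Fin n → (ℝ → ℝ)) → ℝ) :
    ∃ (f : Fin n → ℝ → ℝ) (G : Finset (Fin n)),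
      -- regularity: twice differentiable, 1-smooth, μ-strongly convex
      (∀ i, Differentiable ℝ (f i) ∧ Differentiable ℝ (deriv (f i)) ∧
        (∀ a b : ℝ, |deriv (f i) a - deriv (f i) b| ≤ 1 * |a - b|) ∧
        (∀ a b : ℝ, f i a + deriv (f i) a * (b - a) + (μ / 2) * (b - a) ^ 2 ≤ f i b)) ∧
      -- at least (1-δ)n good workers
      (1 - δ) * n ≤ (G.card : ℝ) ∧
      -- (i) heterogeneity bound for the good objective
      (∀ z : ℝ,
        (G.card : ℝ)⁻¹ * ∑ i ∈ G,
            |deriv (f i) z - deriv (fun w => (G.card : ℝ)⁻¹ * ∑ j ∈ G, f j w) z| ^ 2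
          ≤ ζ ^ 2) ∧
      -- (ii) suboptimality lower bound at the algorithm's output
      (δ * ζ ^ 2 / (8 * μ) ≤
        (G.card : ℝ)⁻¹ * ∑ j ∈ G, f j (Alg f) -
          ⨅ z : ℝ, (G.card : ℝ)⁻¹ * ∑ j ∈ G, f j z) ∧
      -- (iii) squared gradient lower bound at the algorithm's output
      δ * ζ ^ 2 / 4 ≤
        |deriv (fun w => (G.card : ℝ)⁻¹ * ∑ j ∈ G, f j w) (Alg f)| ^ 2 := by
  obtain ⟨q, hq0, hqδ⟩ := hδn
  have hn' : (1:ℝ) ≤ n := by exact_mod_cast hn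
  have hδ1 : δ < 1 := lt_of_le_of_lt hδ (by norm_num)
  have hq2 : 2 * q ≤ n := by
    have : ((2 * q : ℕ) : ℝ) ≤ (n : ℝ) := by push_cast; rw [hqδ]; nlinarith
    exact_mod_cast this
  have hqn : q < n := by omega
  set s := δ * (1 - δ) with hs
  have hs0 : 0 < s := mul_pos hδ0 (by linarith)
  have hsqrt : Real.sqrt s ^ 2 = s := Real.sq_sqrt hs0.le
  have hsqrt0 : 0 < Real.sqrt s := Real.sqrt_pos.2 hs0
  set c := ζ / (μ * Real.sqrt s) with hc
  have hc0 : 0 < c := div_pos hζ (mul_pos hμ0 hsqrt0)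
  have hkey : μ ^ 2 * c ^ 2 * s = ζ ^ 2 := by
    rw [hc, div_pow, mul_pow, hsqrt]
    field_simp
  set a : Fin n → ℝ := fun i => if (i:ℕ) < q then c else 0 with ha
  set f : Fin n → ℝ → ℝ := fun i z => μ/2*(z - a i)^2 with hf
  have hfeq : ∀ i, f i = fun z => μ/2*(z - a i)^2 := fun i => rfl
  -- cardinality of the shifted block
  have hcardlt : (Finset.univ.filter (fun i : Fin n => (i:ℕ) < q)).card = q := by
    have : (Finset.univ.filter (fun i : Fin n => (i:ℕ) < q)) = Finset.Iio ⟨q, hqn⟩ := by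
      ext i; simp [Fin.lt_def]
    rw [this, Fin.card_Iio]
  have hcardge : (Finset.univ.filter (fun i : Fin n => ¬ (i:ℕ) < q)).card = n - q := by
    have h := Finset.card_filter_add_card_filter_not
      (s := (Finset.univ : Finset (Fin n))) (p := fun i : Fin n => (i:ℕ) < q)
    simp only [Finset.card_univ, Fintype.card_fin] at h
    omega
  -- regularity of the f i
  have hderiv : ∀ i, deriv (f i) = fun z => μ*(z - a i) := by
    intro i; exact funext fun z => (hasDerivAt_quad _ _ z).deriv
  have hreg : ∀ i, Differentiable ℝ (f i) ∧ Differentiable ℝ (deriv (f i)) ∧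
      (∀ x y : ℝ, |deriv (f i) x - deriv (f i) y| ≤ 1 * |x - y|) ∧
      (∀ x y : ℝ, f i x + deriv (f i) x * (y - x) + (μ / 2) * (y - x) ^ 2 ≤ f i y) := by
    intro i
    refine ⟨fun x => (hasDerivAt_quad μ (a i) x).differentiableAt, ?_, ?_, ?_⟩
    · rw [hderiv i]
      exact (differentiable_id.sub_const _).const_mul μ
    · intro x y
      simp only [hderiv i]
      have h1 : μ*(x - a i) - μ*(y - a i) = μ*(x - y) := by ring
      rw [h1, abs_mul, abs_of_pos hμ0, one_mul]
      exact mul_le_of_le_one_left (abs_nonneg _) hμ1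
    · intro x y
      simp only [hderiv i, hf, (hasDerivAt_quad μ (a i) x).deriv]
      nlinarith [sq_nonneg (y - x)]
  set x := Alg f with hx
  by_cases hcase : δ * c / 2 ≤ |x|
  · -- scenario 1: good set is the unshifted block, minimizer m = 0
    set G : Finset (Fin n) := Finset.univ.filter (fun i : Fin n => ¬ (i:ℕ) < q) with hG
    have hGcard : (G.card : ℝ) = (n : ℝ) - (q : ℝ) := by
      rw [hG, hcardge]
      push_cast [Nat.cast_sub hqn.le]
      ring
    have hGpos : (0:ℝ) < (G.card : ℝ) := by
      rw [hGcard, hqδ]; nlinarith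
    have hin : ∀ j ∈ G, a j = 0 := by
      intro j hj
      rw [hG, Finset.mem_filter] at hj
      simp [ha, hj.2]
    have hcard1 : (1 - δ) * n ≤ (G.card : ℝ) := by
      rw [hGcard, hqδ]; ring_nf; rfl
    have havg : ∀ z : ℝ, (G.card : ℝ)⁻¹ * ∑ j ∈ G, μ/2*(z - a j)^2
        = μ/2*(z - 0)^2 + 0 := by
      intro z
      rw [Finset.sum_congr rfl (fun j hj => by rw [hin j hj]), Finset.sum_const,
        nsmul_eq_mul]
      field_simp
      ring
    have het : ∀ z : ℝ, (G.card : ℝ)⁻¹ * ∑ i ∈ G, |μ*(z - a i) - μ*(z - 0)|^2 ≤ ζ^2 := by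
      intro z
      have : ∀ i ∈ G, |μ*(z - a i) - μ*(z - 0)|^2 = 0 := by
        intro i hi; rw [hin i hi]; simp
      rw [Finset.sum_congr rfl this, Finset.sum_const]
      simp [le_of_lt (pow_pos hζ 2)]
    have hxfar : δ * ζ^2 ≤ 4 * μ^2 * (x - 0)^2 := by
      have h1 : (δ * c / 2)^2 ≤ x^2 := by
        rw [← sq_abs x]
        exact pow_le_pow_left₀ (by positivity) hcase 2
      have h2 : μ^2 * c^2 = ζ^2 / s := by
        field_simp at hkey ⊢; linarith [hkey]
      have h1δ : (1:ℝ) - δ ≠ 0 := by linarith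
      have h3 : δ^2 * (ζ^2 / s) = δ * ζ^2 / (1 - δ) := by
        rw [hs]; field_simp
      have h4 : δ * ζ^2 ≤ δ * ζ^2 / (1 - δ) := by
        rw [le_div_iff₀ (by linarith)]
        nlinarith [sq_nonneg ζ]
      calc δ * ζ^2 ≤ δ * ζ^2 / (1 - δ) := h4
        _ = δ^2 * (μ^2 * c^2) := by rw [h2, h3]
        _ = 4 * μ^2 * (δ * c / 2)^2 := by ring
        _ ≤ 4 * μ^2 * (x - 0)^2 := by nlinarith [h1, sq_nonneg μ]
    obtain ⟨c1, c2, c3⟩ := scenario n μ δ ζ hμ0 a f hfeq G 0 0 havg het x hxfar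
    exact ⟨f, G, hreg, hcard1, c1, c2, c3⟩
  · -- scenario 2: good set is everyone, minimizer m = δ c
    push_neg at hcase
    set G : Finset (Fin n) := Finset.univ with hG
    have hGcard : (G.card : ℝ) = (n : ℝ) := by
      rw [hG, Finset.card_univ, Fintype.card_fin]
    have hnpos : (0:ℝ) < (n:ℝ) := by linarith
    have hcard1 : (1 - δ) * n ≤ (G.card : ℝ) := by
      rw [hGcard]; nlinarith
    have hsplit : ∀ (u v : ℝ), ∑ i : Fin n, (if (i:ℕ) < q then u else v)
        = (q:ℝ) * u + ((n:ℝ) - (q:ℝ)) * v := by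
      intro u v
      rw [Finset.sum_ite, Finset.sum_const, Finset.sum_const, hcardlt, hcardge,
        nsmul_eq_mul, nsmul_eq_mul]
      push_cast [Nat.cast_sub hqn.le]
      ring
    have hterm : ∀ (z : ℝ) (i : Fin n), μ/2*(z - a i)^2
        = if (i:ℕ) < q then μ/2*(z - c)^2 else μ/2*(z - 0)^2 := by
      intro z i
      by_cases h : (i:ℕ) < q <;> simp [ha, h]
    have havg : ∀ z : ℝ, (G.card : ℝ)⁻¹ * ∑ j ∈ G, μ/2*(z - a j)^2
        = μ/2*(z - δ*c)^2 + μ/2*s*c^2 := by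
      intro z
      have hsum : ∑ j ∈ G, μ/2*(z - a j)^2
          = ∑ j : Fin n, (if (j:ℕ) < q then μ/2*(z - c)^2 else μ/2*(z - 0)^2) := by
        rw [hG]
        exact Finset.sum_congr rfl (fun j _ => hterm z j)
      rw [hsum, hsplit, hqδ, hGcard, hs]
      field_simp
      ring
    have hterm2 : ∀ (z : ℝ) (i : Fin n), |μ*(z - a i) - μ*(z - δ*c)|^2
        = if (i:ℕ) < q then μ^2*(δ*c - c)^2 else μ^2*(δ*c)^2 := by
      intro z i
      by_cases h : (i:ℕ) < q <;> simp only [ha, h, if_true, if_false] <;>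
        rw [sq_abs] <;> ring_nf
    have het : ∀ z : ℝ, (G.card : ℝ)⁻¹ * ∑ i ∈ G, |μ*(z - a i) - μ*(z - δ*c)|^2
        ≤ ζ^2 := by
      intro z
      have hsum : ∑ i ∈ G, |μ*(z - a i) - μ*(z - δ*c)|^2
          = ∑ i : Fin n, (if (i:ℕ) < q then μ^2*(δ*c - c)^2 else μ^2*(δ*c)^2) := by
        rw [hG]
        exact Finset.sum_congr rfl (fun i _ => hterm2 z i)
      rw [hsum, hsplit, hqδ]
      have : (n:ℝ)⁻¹ * (δ * n * (μ^2*(δ*c - c)^2) + ((n:ℝ) - δ*n) * (μ^2*(δ*c)^2))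
          = μ^2 * c^2 * s := by
        rw [hs]; field_simp; ring
      rw [hGcard, this, hkey]
    have hxfar : δ * ζ^2 ≤ 4 * μ^2 * (x - δ*c)^2 := by
      have h1 : δ * c / 2 ≤ |x - δ*c| := by
        cases abs_cases (x - δ*c) with
        | inl h => cases abs_cases x <;> nlinarith [hc0, hδ0]
        | inr h => cases abs_cases x <;> nlinarith [hc0, hδ0]
      have h1' : (δ * c / 2)^2 ≤ (x - δ*c)^2 := by
        rw [← sq_abs (x - δ*c)]
        apply pow_le_pow_left₀ (by positivity) h1
      have h2 : μ^2 * c^2 = ζ^2 / s := by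
        field_simp at hkey ⊢; linarith [hkey]
      have h1δ : (1:ℝ) - δ ≠ 0 := by linarith
      have h3 : δ^2 * (ζ^2 / s) = δ * ζ^2 / (1 - δ) := by
        rw [hs]; field_simp
      have h4 : δ * ζ^2 ≤ δ * ζ^2 / (1 - δ) := by
        rw [le_div_iff₀ (by linarith)]
        nlinarith [sq_nonneg ζ]
      calc δ * ζ^2 ≤ δ * ζ^2 / (1 - δ) := h4
        _ = δ^2 * (μ^2 * c^2) := by rw [h2, h3]
        _ = 4 * μ^2 * (δ * c / 2)^2 := by ring
        _ ≤ 4 * μ^2 * (x - δ*c)^2 := by nlinarith [h1']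
    obtain ⟨c1, c2, c3⟩ := scenario n μ δ ζ hμ0 a f hfeq G (δ*c) (μ/2*s*c^2) havg het x hxfar
    exact ⟨f, G, hreg, hcard1, c1, c2, c3⟩
end

section
/- (Descent bound.) Let f : ℝ^d → ℝ be differentiable with L-Lipschitz gradient, let 0 < η ≤ 1/L, let x, m, m̄ ∈ ℝ^d be arbitrary, and set x' := x − η m. Then f(x') ≤ f(x) − (η/2) ‖∇f(x)‖² + η ‖m̄ − ∇f(x)‖² + η ‖m − m̄‖². -/
open MeasureTheory

open scoped RealInnerProductSpace in
lemma smooth_descent {d : ℕ} (f : EuclideanSpace ℝ (Fin d) → ℝ) (L : ℝ)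
    (hdiff : Differentiable ℝ f)
    (hlip : ∀ a b : EuclideanSpace ℝ (Fin d),
      ‖gradient f a - gradient f b‖ ≤ L * ‖a - b‖)
    (x v : EuclideanSpace ℝ (Fin d)) :
    f (x + v) ≤ f x + ⟪gradient f x, v⟫ + L / 2 * ‖v‖ ^ 2 := by
  set g : ℝ → ℝ := fun t => f (x + t • v) with hg
  have hderiv : ∀ t : ℝ, HasDerivAt g ⟪gradient f (x + t • v), v⟫ t := by
    intro t
    have h1 : HasDerivAt (fun t : ℝ => x + t • v) v t := by
      simpa using (hasDerivAt_id t).smul_const v |>.const_add x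
    have h2 := (hdiff (x + t • v)).hasGradientAt.hasFDerivAt
    have := h2.comp_hasDerivAt t h1
    simpa [InnerProductSpace.toDual_apply_apply, hg, Function.comp_def] using this
  have hcontgrad : Continuous (gradient f) := by
    rcases le_or_gt L 0 with hL0 | hL0
    · have : ∀ a b, gradient f a = gradient f b := by
        intro a b
        have := hlip a b
        have : ‖gradient f a - gradient f b‖ ≤ 0 :=
          this.trans (mul_nonpos_of_nonpos_of_nonneg hL0 (norm_nonneg _))
        have := le_antisymm this (norm_nonneg _)
        rwa [norm_eq_zero, sub_eq_zero] at this
      have : gradient f = fun _ => gradient f 0 := funext fun a => this a 0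
      rw [this]; exact continuous_const
    · exact (LipschitzWith.of_dist_le_mul (K := ⟨L, hL0.le⟩) fun a b => by
        rw [dist_eq_norm, dist_eq_norm]; exact hlip a b).continuous
  have hcont : Continuous fun t : ℝ => ⟪gradient f (x + t • v), v⟫ := by
    exact (hcontgrad.comp (by continuity)).inner continuous_const
  have hint : g 1 - g 0 = ∫ t in (0:ℝ)..1, ⟪gradient f (x + t • v), v⟫ := by
    rw [intervalIntegral.integral_eq_sub_of_hasDerivAt
      (fun t _ => hderiv t) (hcont.intervalIntegrable 0 1)]
  have hbound : ∀ t ∈ Set.Icc (0:ℝ) 1,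
      ⟪gradient f (x + t • v), v⟫ ≤ ⟪gradient f x, v⟫ + L * t * ‖v‖ ^ 2 := by
    intro t ht
    have h1 : ⟪gradient f (x + t • v), v⟫ - ⟪gradient f x, v⟫
        = ⟪gradient f (x + t • v) - gradient f x, v⟫ := by
      rw [inner_sub_left]
    have h2 : ⟪gradient f (x + t • v) - gradient f x, v⟫ ≤
        ‖gradient f (x + t • v) - gradient f x‖ * ‖v‖ :=
      real_inner_le_norm _ _
    have h3 : ‖gradient f (x + t • v) - gradient f x‖ ≤ L * (t * ‖v‖) := by
      have := hlip (x + t • v) x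
      simpa [norm_smul, abs_of_nonneg ht.1] using this
    nlinarith [norm_nonneg v, norm_nonneg (gradient f (x + t • v) - gradient f x)]
  have hkey : g 1 - g 0 ≤ ⟪gradient f x, v⟫ + L / 2 * ‖v‖ ^ 2 := by
    rw [hint]
    have : (∫ t in (0:ℝ)..1, ⟪gradient f (x + t • v), v⟫)
        ≤ ∫ t in (0:ℝ)..1, (⟪gradient f x, v⟫ + L * t * ‖v‖ ^ 2) := by
      apply intervalIntegral.integral_mono_on (by norm_num)
        (hcont.intervalIntegrable 0 1)
        ((by continuity : Continuous fun t : ℝ =>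
          ⟪gradient f x, v⟫ + L * t * ‖v‖ ^ 2).intervalIntegrable 0 1)
        hbound
    refine this.trans_eq ?_
    have hc2 : Continuous fun t : ℝ => L * t * ‖v‖ ^ 2 := by fun_prop
    rw [intervalIntegral.integral_add (intervalIntegrable_const)
      (hc2.intervalIntegrable 0 1)]
    simp only [intervalIntegral.integral_const, smul_eq_mul]
    have h2 : (∫ t in (0:ℝ)..1, L * t * ‖v‖ ^ 2) = L * ‖v‖ ^ 2 * ∫ t in (0:ℝ)..1, t := by
      rw [← intervalIntegral.integral_const_mul]
      apply intervalIntegral.integral_congr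
      intro t _; ring
    rw [h2, integral_id]; ring
  have hg1 : g 1 = f (x + v) := by simp [hg]
  have hg0 : g 0 = f x := by simp [hg]
  rw [hg1, hg0] at hkey
  linarith

open scoped RealInnerProductSpace in
/-- **Descent bound.** If `f : ℝ^d → ℝ` is differentiable with `L`-Lipschitz gradient,
`0 < η ≤ 1/L`, and `x' = x - η • m`, then
`f x' ≤ f x - (η/2)‖∇f x‖² + η‖m̄ - ∇f x‖² + η‖m - m̄‖²`. -/
theorem descent_bound {d : ℕ} (f : EuclideanSpace ℝ (Fin d) → ℝ) (L η : ℝ)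
    (hL : 0 < L)
    (hdiff : Differentiable ℝ f)
    (hlip : ∀ a b : EuclideanSpace ℝ (Fin d),
      ‖gradient f a - gradient f b‖ ≤ L * ‖a - b‖)
    (hη_pos : 0 < η) (hη : η ≤ 1 / L)
    (x m mbar : EuclideanSpace ℝ (Fin d)) :
    f (x - η • m) ≤
      f x - (η / 2) * ‖gradient f x‖ ^ 2 + η * ‖mbar - gradient f x‖ ^ 2
        + η * ‖m - mbar‖ ^ 2 := by
  set g := gradient f x with hgdef
  have h0 := smooth_descent f L hdiff hlip x (-(η • m))
  have hxv : x + -(η • m) = x - η • m := by abel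
  rw [hxv] at h0
  have hinner : ⟪g, -(η • m)⟫ = -η * ⟪g, m⟫ := by
    rw [inner_neg_right, real_inner_smul_right]; ring
  have hnorm : ‖-(η • m)‖ ^ 2 = η ^ 2 * ‖m‖ ^ 2 := by
    rw [norm_neg, norm_smul]
    simp [abs_of_pos hη_pos, mul_pow]
  rw [hinner, hnorm] at h0
  have hηL : η * L ≤ 1 := by
    rw [le_div_iff₀ hL] at hη; linarith
  have hstep : f (x - η • m) ≤ f x - η * ⟪g, m⟫ + η / 2 * ‖m‖ ^ 2 := by
    have : L / 2 * (η ^ 2 * ‖m‖ ^ 2) ≤ η / 2 * ‖m‖ ^ 2 := by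
      nlinarith [sq_nonneg ‖m‖, hη_pos.le]
    linarith
  have hsq : ‖m - g‖ ^ 2 = ‖m‖ ^ 2 - 2 * ⟪g, m⟫ + ‖g‖ ^ 2 := by
    rw [norm_sub_sq_real, real_inner_comm]
  have htri : ‖m - g‖ ≤ ‖m - mbar‖ + ‖mbar - g‖ := by
    simpa using norm_sub_le_norm_sub_add_norm_sub m mbar g
  have hsplit : ‖m - g‖ ^ 2 ≤ 2 * ‖m - mbar‖ ^ 2 + 2 * ‖mbar - g‖ ^ 2 := by
    nlinarith [norm_nonneg (m - g), norm_nonneg (m - mbar), norm_nonneg (mbar - g),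
      sq_nonneg (‖m - mbar‖ - ‖mbar - g‖), htri]
  nlinarith [hstep, hsq, hsplit, hη_pos.le]
end

section
/- (Momentum deviation recursion.) Let (F_t)_{t≥1} be a filtration on a probability space, let α ∈ [0,1] and σ ≥ 0, and let (ε_t)_{t≥1} be square-integrable random vectors in a real Hilbert space such that ε_t is F_t-measurable for each t, E‖ε_1‖² ≤ σ², and for t ≥ 2, E[ε_t | F_{t−1}] = 0 and E[‖ε_t‖² | F_{t−1}] ≤ σ² almost surely. Define d_1 := ε_1 and d_t := (1−α) d_{t−1} + α ε_t for t ≥ 2. Then for every t ≥ 1, E‖d_t‖² ≤ σ² (α + (1−α)^{t−1}). -/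
open MeasureTheory

private lemma aux_inner_zero {H : Type*} [NormedAddCommGroup H] [InnerProductSpace ℝ H]
    [CompleteSpace H]
    {Ω : Type*} [m0 : MeasurableSpace Ω] (P : Measure Ω) [IsProbabilityMeasure P]
    (F : ℕ → MeasurableSpace Ω) (t : ℕ) (hm : F t ≤ m0) {f g : Ω → H}
    (hf : MemLp f 2 P) (hg : MemLp g 2 P) (hfm : StronglyMeasurable[F t] f)
    (hcond : P[g|F t] =ᵐ[P] fun _ => (0:H)) :
    ∫ ω, (inner ℝ (f ω) (g ω) : ℝ) ∂P = 0 := by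
  haveI : SigmaFinite (P.trim hm) := by infer_instance
  set fL := hf.toLp f
  set gL := hg.toLp g
  have hfLm : AEStronglyMeasurable[F t] (fL : Ω → H) P :=
    AEStronglyMeasurable.congr hfm.aestronglyMeasurable hf.coeFn_toLp.symm
  have hce : ((condExpL2 H ℝ hm gL : Ω →₂[P] H) : Ω → H) =ᵐ[P] P[g|F t] := by
    refine ae_eq_condExp_of_forall_setIntegral_eq hm (hg.integrable one_le_two) ?_ ?_ ?_
    · intro s hs hμs
      exact integrableOn_condExpL2_of_measure_ne_top hm hμs.ne gL
    · intro s hs hμs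
      rw [integral_condExpL2_eq hm gL hs hμs.ne]
      exact integral_congr_ae (ae_restrict_of_ae hg.coeFn_toLp)
    · exact lpMeas.aestronglyMeasurable _
  have hce0 : ((condExpL2 H ℝ hm gL : Ω →₂[P] H) : Ω → H) =ᵐ[P] fun _ => (0:H) :=
    hce.trans hcond
  set A : Ω →₂[P] H := (condExpL2 H ℝ hm gL : Ω →₂[P] H) with hA
  have key : (inner ℝ A fL : ℝ) = inner ℝ gL fL :=
    inner_condExpL2_eq_inner_fun hm gL fL hfLm
  calc ∫ ω, (inner ℝ (f ω) (g ω) : ℝ) ∂P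
      = ∫ ω, (inner ℝ (gL ω) (fL ω) : ℝ) ∂P := by
        refine integral_congr_ae ?_
        filter_upwards [hg.coeFn_toLp, hf.coeFn_toLp] with ω h1 h2
        rw [h1, h2, real_inner_comm]
    _ = (inner ℝ gL fL : ℝ) := (L2.inner_def gL fL).symm
    _ = (inner ℝ A fL : ℝ) := key.symm
    _ = ∫ ω, (inner ℝ (A ω) (fL ω) : ℝ) ∂P := L2.inner_def A fL
    _ = 0 := by
        have hz : (fun ω => (inner ℝ (A ω) (fL ω) : ℝ)) =ᵐ[P] fun _ => (0:ℝ) :=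
          hce0.mono fun x hx => by simp [hx]
        rw [integral_congr_ae hz]
        simp

private lemma aux_sq_integrable {H : Type*} [NormedAddCommGroup H] [InnerProductSpace ℝ H]
    {Ω : Type*} [m0 : MeasurableSpace Ω] {P : Measure Ω} {f : Ω → H}
    (hf : MemLp f 2 P) : Integrable (fun ω => ‖f ω‖ ^ 2) P := by
  have h := L2.integrable_inner (𝕜 := ℝ) (hf.toLp f) (hf.toLp f)
  refine (integrable_congr ?_).mp h
  filter_upwards [hf.coeFn_toLp] with ω hω
  rw [hω, real_inner_self_eq_norm_sq]

private lemma aux_inner_integrable {H : Type*} [NormedAddCommGroup H] [InnerProductSpace ℝ H]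
    {Ω : Type*} [m0 : MeasurableSpace Ω] {P : Measure Ω} {f g : Ω → H}
    (hf : MemLp f 2 P) (hg : MemLp g 2 P) :
    Integrable (fun ω => (inner ℝ (f ω) (g ω) : ℝ)) P := by
  have h := L2.integrable_inner (𝕜 := ℝ) (hf.toLp f) (hg.toLp g)
  refine (integrable_congr ?_).mp h
  filter_upwards [hf.coeFn_toLp, hg.coeFn_toLp] with ω h1 h2
  rw [h1, h2]

/-- **Momentum deviation recursion.**
Let `(F_t)` be a filtration, `α ∈ [0,1]`, `σ ≥ 0`, and `(ε_t)_{t≥1}` square-integrable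
adapted random vectors in a real Hilbert space with `E‖ε₁‖² ≤ σ²` and, for `t ≥ 2`,
`E[ε_t | F_{t-1}] = 0` and `E[‖ε_t‖² | F_{t-1}] ≤ σ²` a.s.
If `d₁ = ε₁` and `d_t = (1-α) d_{t-1} + α ε_t` for `t ≥ 2`, then for every `t ≥ 1`,
`E‖d_t‖² ≤ σ² (α + (1-α)^{t-1})`. -/
theorem momentum_deviation_recursion
    {H : Type*} [NormedAddCommGroup H] [InnerProductSpace ℝ H] [CompleteSpace H]
    {Ω : Type*} [m0 : MeasurableSpace Ω] (P : Measure Ω) [IsProbabilityMeasure P]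
    (F : ℕ → MeasurableSpace Ω) (hFle : ∀ t, F t ≤ m0) (hFmono : Monotone F)
    (α σ : ℝ) (hα0 : 0 ≤ α) (hα1 : α ≤ 1) (hσ : 0 ≤ σ)
    (ε : ℕ → Ω → H)
    (hL2 : ∀ t, 1 ≤ t → MemLp (ε t) 2 P)
    (hadapted : ∀ t, 1 ≤ t → StronglyMeasurable[F t] (ε t))
    (hε1 : ∫ ω, ‖ε 1 ω‖ ^ 2 ∂P ≤ σ ^ 2)
    (hmean : ∀ t, 2 ≤ t → P[ε t | F (t - 1)] =ᵐ[P] fun _ => (0 : H))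
    (hvar : ∀ t, 2 ≤ t →
      ∀ᵐ ω ∂P, (P[fun ω' => ‖ε t ω'‖ ^ 2 | F (t - 1)]) ω ≤ σ ^ 2)
    (dvec : ℕ → Ω → H)
    (hd1 : dvec 1 = ε 1)
    (hdrec : ∀ t, 1 ≤ t →
      dvec (t + 1) = fun ω => (1 - α) • dvec t ω + α • ε (t + 1) ω) :
    ∀ t, 1 ≤ t → ∫ ω, ‖dvec t ω‖ ^ 2 ∂P ≤ σ ^ 2 * (α + (1 - α) ^ (t - 1)) := by
  -- regularity of dvec
  have hreg : ∀ t, 1 ≤ t → MemLp (dvec t) 2 P ∧ StronglyMeasurable[F t] (dvec t) := by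
    intro t ht
    induction t, ht using Nat.le_induction with
    | base => exact hd1 ▸ ⟨hL2 1 le_rfl, hadapted 1 le_rfl⟩
    | succ t ht IH =>
      rw [hdrec t ht]
      constructor
      · exact ((IH.1.const_smul _).add ((hL2 (t+1) (by omega)).const_smul _))
      · exact ((IH.2.mono (hFmono (Nat.le_succ t))).const_smul _).add
          ((hadapted (t+1) (by omega)).const_smul _)
  intro t ht
  induction t, ht using Nat.le_induction with
  | base =>
    have h1 : ∫ ω, ‖dvec 1 ω‖ ^ 2 ∂P ≤ σ ^ 2 := by rw [hd1]; exact hε1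
    have : σ ^ 2 ≤ σ ^ 2 * (α + (1 - α) ^ (1 - 1)) := by
      simp only [Nat.sub_self, pow_zero]
      nlinarith [sq_nonneg σ]
    linarith
  | succ t ht IH =>
    obtain ⟨hdL2, hdmeas⟩ := hreg t ht
    have hεL2 : MemLp (ε (t+1)) 2 P := hL2 (t+1) (by omega)
    have Ia : Integrable (fun ω => ‖dvec t ω‖ ^ 2) P := aux_sq_integrable hdL2
    have Ib : Integrable (fun ω => ‖ε (t+1) ω‖ ^ 2) P := aux_sq_integrable hεL2
    have Ic : Integrable (fun ω => (inner ℝ (dvec t ω) (ε (t+1) ω) : ℝ)) P :=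
      aux_inner_integrable hdL2 hεL2
    -- pointwise expansion
    have hpt : ∀ ω, ‖dvec (t+1) ω‖ ^ 2 =
        (1-α)^2 * ‖dvec t ω‖ ^ 2 + (2*(1-α)*α) * (inner ℝ (dvec t ω) (ε (t+1) ω) : ℝ)
          + α^2 * ‖ε (t+1) ω‖ ^ 2 := by
      intro ω
      rw [hdrec t ht]
      simp only
      rw [norm_add_sq_real, norm_smul, norm_smul, real_inner_smul_left, real_inner_smul_right,
        Real.norm_eq_abs, Real.norm_eq_abs]
      rw [mul_pow, mul_pow, sq_abs, sq_abs]
      ring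
    have hint : ∫ ω, ‖dvec (t+1) ω‖ ^ 2 ∂P =
        (1-α)^2 * ∫ ω, ‖dvec t ω‖ ^ 2 ∂P
          + (2*(1-α)*α) * ∫ ω, (inner ℝ (dvec t ω) (ε (t+1) ω) : ℝ) ∂P
          + α^2 * ∫ ω, ‖ε (t+1) ω‖ ^ 2 ∂P := by
      simp_rw [hpt]
      have I1 : Integrable (fun ω => (1-α)^2 * ‖dvec t ω‖ ^ 2
          + (2*(1-α)*α) * (inner ℝ (dvec t ω) (ε (t+1) ω) : ℝ)) P :=
        (Ia.const_mul _).add (Ic.const_mul _)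
      rw [integral_add I1 (Ib.const_mul _),
        integral_add (Ia.const_mul _) (Ic.const_mul _),
        integral_const_mul, integral_const_mul, integral_const_mul]
    -- cross term vanishes
    have hcross : ∫ ω, (inner ℝ (dvec t ω) (ε (t+1) ω) : ℝ) ∂P = 0 := by
      refine aux_inner_zero P F t (hFle t) hdL2 hεL2 hdmeas ?_
      have := hmean (t+1) (by omega)
      simpa using this
    -- variance bound
    have hEb : ∫ ω, ‖ε (t+1) ω‖ ^ 2 ∂P ≤ σ ^ 2 := by
      haveI : SigmaFinite (P.trim (hFle t)) := by infer_instance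
      have h1 : ∫ ω, ‖ε (t+1) ω‖ ^ 2 ∂P
          = ∫ ω, (P[fun ω' => ‖ε (t+1) ω'‖ ^ 2 | F t]) ω ∂P := by
        rw [integral_condExp (hFle t)]
      have h2 := hvar (t+1) (by omega)
      have h3 : ∫ ω, (P[fun ω' => ‖ε (t+1) ω'‖ ^ 2 | F t]) ω ∂P ≤ ∫ _ω, σ ^ 2 ∂P := by
        refine integral_mono_ae integrable_condExp (integrable_const _) ?_
        simpa [Filter.EventuallyLE] using h2
      rw [h1]
      simpa using h3
    -- arithmetic
    have hIHpos : 0 ≤ ∫ ω, ‖dvec t ω‖ ^ 2 ∂P := integral_nonneg fun ω => by positivity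
    have hbpos : 0 ≤ ∫ ω, ‖ε (t+1) ω‖ ^ 2 ∂P := integral_nonneg fun ω => by positivity
    have hpow : (1-α)^2 * (1-α)^(t-1) = (1-α)^(t+1) := by
      rw [← pow_add]
      congr 1
      omega
    have hple : (1-α)^(t+1) ≤ (1-α)^t :=
      pow_le_pow_of_le_one (by linarith) (by linarith) (Nat.le_succ t)
    have htgt : σ ^ 2 * (α + (1 - α) ^ (t + 1 - 1)) = σ ^ 2 * (α + (1 - α) ^ t) := by
      norm_num
    rw [hint, hcross, htgt]
    have step1 : (1-α)^2 * ∫ ω, ‖dvec t ω‖ ^ 2 ∂P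
        ≤ (1-α)^2 * (σ ^ 2 * (α + (1 - α) ^ (t - 1))) :=
      mul_le_mul_of_nonneg_left IH (sq_nonneg _)
    have step2 : α^2 * ∫ ω, ‖ε (t+1) ω‖ ^ 2 ∂P ≤ α^2 * σ^2 :=
      mul_le_mul_of_nonneg_left hEb (sq_nonneg _)
    have hkey : (1-α)^2 * (σ ^ 2 * (α + (1 - α) ^ (t - 1))) + α^2 * σ^2
        ≤ σ ^ 2 * (α + (1 - α) ^ t) := by
      have hexp : (1-α)^2 * (σ ^ 2 * (α + (1 - α) ^ (t - 1)))
          = σ^2 * ((1-α)^2 * α) + σ^2 * (1-α)^(t+1) := by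
        rw [← hpow]; ring
      have hcoef : (1-α)^2 * α + α^2 ≤ α := by nlinarith
      have hσ2 : (0:ℝ) ≤ σ^2 := sq_nonneg σ
      nlinarith [mul_le_mul_of_nonneg_left hple hσ2, mul_le_mul_of_nonneg_left hcoef hσ2]
    linarith
end
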